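/- Let G_{m,n} = S_m □ P_n with n even, and let f be a radio labeling of G_{m,n}. Let G⁺(i) be the set of vertices of the two stars S_{m(i)}, S_{m(i+n/2)} together with the center vertex w_1 = (u_1, v_{i+n/2+1}) of S_{m(i+n/2+1)} (assuming i + n/2 + 1 ≤ n). Then the span of f restricted to G⁺(i), i.e., max f − min f over these vertices, is at least mn + 3. -/

import Mathlib

/-- The star graph on `m` vertices with center `0`. -/
def starGraph (m : ℕ) : SimpleGraph (Fin m) :=
  SimpleGraph.fromRel (fun a _ => (a : ℕ) = 0)

/-- The path graph on `n` vertices `0, 1, …, n-1`. -/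
def pathGraph' (n : ℕ) : SimpleGraph (Fin n) :=
  SimpleGraph.fromRel (fun a b => (a : ℕ) + 1 = b)

/-- The stacked-book graph `G_{m,n} = S_m □ P_n`. -/
def bookGraph (m n : ℕ) : SimpleGraph (Fin m × Fin n) :=
  (starGraph m).boxProd (pathGraph' n)

/-- `f` is a radio labeling of `G` for diameter `D`:
`|f u - f v| ≥ D + 1 - d(u,v)` for all distinct `u, v`. -/
def IsRadioLabeling {V : Type*} (G : SimpleGraph V) (D : ℕ) (f : V → ℕ) : Prop :=
  ∀ u v : V, u ≠ v → (D : ℤ) + 1 - G.dist u v ≤ |(f u : ℤ) - (f v : ℤ)|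

/-- The span of a labeling: maximum label minus minimum label. -/
noncomputable def span {V : Type*} (f : V → ℕ) : ℕ :=
  sSup (Set.range f) - sInf (Set.range f)

/-- The radio number of the stacked-book graph `G_{m,n}` (whose diameter is `n+1`). -/
noncomputable def rnBook (m n : ℕ) : ℕ :=
  sInf {s | ∃ f : Fin m × Fin n → ℕ, IsRadioLabeling (bookGraph m n) (n + 1) f ∧ span f = s}

lemma star_walk {m : ℕ} (a b : Fin m) :
    ∃ q : (starGraph m).Walk a b, q.length ≤ 2 ∧
      ((a : ℕ) = 0 ∨ (b : ℕ) = 0 → q.length ≤ 1) ∧ (a = b → q.length = 0) := by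
  by_cases hab : a = b
  · subst hab; exact ⟨SimpleGraph.Walk.nil, by simp⟩
  · have hm : 0 < m := a.pos
    by_cases ha : (a : ℕ) = 0
    · have hadj : (starGraph m).Adj a b := (SimpleGraph.fromRel_adj _ _ _).2 ⟨hab, Or.inl ha⟩
      exact ⟨SimpleGraph.Walk.cons hadj SimpleGraph.Walk.nil, by simp, fun _ => by simp, fun h => absurd h hab⟩
    · by_cases hb : (b : ℕ) = 0
      · have hadj : (starGraph m).Adj a b := (SimpleGraph.fromRel_adj _ _ _).2 ⟨hab, Or.inr hb⟩
        exact ⟨SimpleGraph.Walk.cons hadj SimpleGraph.Walk.nil, by simp, fun _ => by simp, fun h => absurd h hab⟩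
      · set c : Fin m := ⟨0, hm⟩ with hc
        have h1 : (starGraph m).Adj a c := by
          refine (SimpleGraph.fromRel_adj _ _ _).2 ⟨?_, Or.inr rfl⟩
          intro h; apply ha; rw [h]
        have h2 : (starGraph m).Adj c b := by
          refine (SimpleGraph.fromRel_adj _ _ _).2 ⟨?_, Or.inl rfl⟩
          intro h; apply hb; rw [← h]
        refine ⟨SimpleGraph.Walk.cons h1 (SimpleGraph.Walk.cons h2 SimpleGraph.Walk.nil),
          by simp, fun h => ?_, fun h => absurd h hab⟩
        rcases h with h | h; exact absurd h ha; exact absurd h hb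

lemma path_walk {n : ℕ} (t : ℕ) : ∀ (j k : Fin n), (j : ℕ) + t = (k : ℕ) →
    ∃ p : (pathGraph' n).Walk j k, p.length = t := by
  induction t with
  | zero => intro j k h; have : j = k := Fin.ext (by omega); subst this; exact ⟨SimpleGraph.Walk.nil, rfl⟩
  | succ t ih =>
    intro j k h
    have hj1 : (j : ℕ) + 1 < n := by have := k.isLt; omega
    set j' : Fin n := ⟨(j : ℕ) + 1, hj1⟩ with hj'
    have hadj : (pathGraph' n).Adj j j' := by
      refine (SimpleGraph.fromRel_adj _ _ _).2 ⟨?_, Or.inl rfl⟩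
      intro hh; have := congrArg Fin.val hh; simp [hj'] at this
    obtain ⟨p, hp⟩ := ih j' k (by simp [hj']; omega)
    exact ⟨SimpleGraph.Walk.cons hadj p, by simp [hp]⟩

lemma book_dist_le {m n : ℕ} (a b : Fin m) (j k : Fin n) (hjk : (j : ℕ) ≤ (k : ℕ)) (s : ℕ)
    (hq : ∃ q : (starGraph m).Walk a b, q.length ≤ s) :
    (bookGraph m n).dist (a, j) (b, k) ≤ s + ((k : ℕ) - (j : ℕ)) := by
  obtain ⟨q, hql⟩ := hq
  obtain ⟨p, hpl⟩ := path_walk ((k : ℕ) - (j : ℕ)) j k (by omega)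
  calc (bookGraph m n).dist (a, j) (b, k)
      ≤ ((q.boxProdLeft (pathGraph' n) j).append
          (SimpleGraph.Walk.boxProdRight (starGraph m) b p)).length := SimpleGraph.dist_le _
    _ = q.length + p.length := by
        simp [SimpleGraph.Walk.length_append, SimpleGraph.Walk.boxProdLeft,
          SimpleGraph.Walk.boxProdRight, SimpleGraph.Walk.length_map]
        exact (SimpleGraph.Walk.length_append _ _).trans
          (congrArg₂ (· + ·) (SimpleGraph.Walk.length_map _ _) (SimpleGraph.Walk.length_map _ _))
    _ ≤ s + ((k : ℕ) - (j : ℕ)) := by omega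

/-- `p` is the center vertex at level `l`. -/
abbrev PA (l : ℕ) {m n : ℕ} (p : Fin m × Fin n) : Prop := (p.1 : ℕ) = 0 ∧ (p.2 : ℕ) = l

def Xf (i h : ℕ) {m n : ℕ} (u v : Fin m × Fin n) : ℕ :=
  (if PA i u ∨ PA i v then 1 else 0) +
  (if PA (i + h) u ∨ PA (i + h) v then 1 else 0) +
  (if (((u.2 : ℕ) = i) ↔ ((v.2 : ℕ) = i)) then 1 else 0)

set_option maxHeartbeats 1000000 in
lemma Xf_comm (i h : ℕ) {m n : ℕ} (u v : Fin m × Fin n) : Xf i h u v = Xf i h v u := by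
  unfold Xf PA
  split_ifs <;> omega

set_option maxHeartbeats 1000000 in
lemma aux_dist {m n : ℕ} (i h : ℕ) (hh2 : 2 ≤ h) (hn2 : n = 2 * h)
    (a b : Fin m) (j k : Fin n)
    (hu : (j : ℕ) = i ∨ (j : ℕ) = i + h ∨ ((a : ℕ) = 0 ∧ (j : ℕ) = i + h + 1))
    (hv : (k : ℕ) = i ∨ (k : ℕ) = i + h ∨ ((b : ℕ) = 0 ∧ (k : ℕ) = i + h + 1))
    (hne : ¬((a : ℕ) = (b : ℕ) ∧ (j : ℕ) = (k : ℕ)))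
    (hjk : (j : ℕ) ≤ (k : ℕ)) :
    (bookGraph m n).dist (a, j) (b, k) + Xf i h (a, j) (b, k) ≤ h + 2 := by
  obtain ⟨q, hq2, hq1, hq0⟩ := star_walk a b
  have hd2 := book_dist_le a b j k hjk 2 ⟨q, hq2⟩
  have hd1 : (a : ℕ) = 0 ∨ (b : ℕ) = 0 →
      (bookGraph m n).dist (a, j) (b, k) ≤ 1 + ((k : ℕ) - (j : ℕ)) :=
    fun hab => book_dist_le a b j k hjk 1 ⟨q, hq1 hab⟩
  have hd0 : (a : ℕ) = (b : ℕ) →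
      (bookGraph m n).dist (a, j) (b, k) ≤ 0 + ((k : ℕ) - (j : ℕ)) :=
    fun hab => book_dist_le a b j k hjk 0 ⟨q, le_of_eq (hq0 (Fin.ext hab))⟩
  clear hq0 hq1 hq2
  generalize hgen : (bookGraph m n).dist (a, j) (b, k) = d at hd2 hd1 hd0 ⊢
  unfold Xf PA
  dsimp only
  split_ifs <;> omega


lemma card_even_range (M : ℕ) :
    ((Finset.range (2 * M + 1)).filter (fun k => k % 2 = 0)).card = M + 1 := by
  induction M with
  | zero => decide
  | succ M ih =>
    have h3 : 2 * (M + 1) + 1 = (2 * M + 1) + 1 + 1 := by ring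
    rw [h3, Finset.range_add_one, Finset.range_add_one, Finset.filter_insert, Finset.filter_insert,
      if_pos (by omega : (2 * M + 1 + 1) % 2 = 0), if_neg (by omega : ¬ (2 * M + 1) % 2 = 0),
      Finset.card_insert_of_notMem (by
        simp only [Finset.mem_filter, Finset.mem_range]
        omega)]
    omega

set_option maxHeartbeats 2000000 in
theorem Gplus_span_lower_bound (m n : ℕ) (hm : 3 ≤ m) (hn : n % 2 = 0)
    (i : ℕ) (hi : i + n / 2 + 1 < n)
    (f : Fin m × Fin n → ℕ)
    (hf : IsRadioLabeling (bookGraph m n) (n + 1) f) :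
    let S : Finset (Fin m × Fin n) :=
      Finset.univ.filter (fun p => (p.2 : ℕ) = i ∨ (p.2 : ℕ) = i + n / 2 ∨
        ((p.1 : ℕ) = 0 ∧ (p.2 : ℕ) = i + n / 2 + 1))
    m * n + 3 ≤ sSup (f '' ↑S) - sInf (f '' ↑S) := by
  intro S
  have hh2 : 2 ≤ n / 2 := by omega
  have hn2 : n = 2 * (n / 2) := by omega
  have hm0 : 0 < m := by omega
  have hiA : i < n := by omega
  have hiB : i + n / 2 < n := by omega
  have hmem : ∀ p : Fin m × Fin n, p ∈ S ↔ ((p.2 : ℕ) = i ∨ (p.2 : ℕ) = i + n / 2 ∨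
      ((p.1 : ℕ) = 0 ∧ (p.2 : ℕ) = i + n / 2 + 1)) := by
    intro p
    constructor
    · intro hp; exact (Finset.mem_filter.1 hp).2
    · intro hp; exact Finset.mem_filter.2 ⟨Finset.mem_univ _, hp⟩
  set cA : Fin m × Fin n := (⟨0, hm0⟩, ⟨i, hiA⟩) with hcA
  set cB : Fin m × Fin n := (⟨0, hm0⟩, ⟨i + n / 2, hiB⟩) with hcB
  set wV : Fin m × Fin n := (⟨0, hm0⟩, ⟨i + n / 2 + 1, hi⟩) with hwV
  -- the key distance estimate
  have key : ∀ u v : Fin m × Fin n, u ∈ S → v ∈ S → u ≠ v →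
      (bookGraph m n).dist u v + Xf i (n / 2) u v ≤ n / 2 + 2 := by
    rintro ⟨a, j⟩ ⟨b, k⟩ hu hv hne
    rw [hmem] at hu hv
    have hne' : ¬((a : ℕ) = (b : ℕ) ∧ (j : ℕ) = (k : ℕ)) := by
      rintro ⟨h1, h2⟩
      exact hne (by rw [Prod.mk.injEq]; exact ⟨Fin.ext h1, Fin.ext h2⟩)
    rcases le_total ((j : ℕ)) ((k : ℕ)) with hjk | hjk
    · exact aux_dist i (n / 2) hh2 hn2 a b j k hu hv hne' hjk
    · have h2 := aux_dist i (n / 2) hh2 hn2 b a k j hv hu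
        (by rintro ⟨h1, h2⟩; exact hne' ⟨h1.symm, h2.symm⟩) hjk
      rw [SimpleGraph.dist_comm, Xf_comm] at h2
      exact h2
  -- the gap estimate for labels
  have gap : ∀ u v : Fin m × Fin n, u ∈ S → v ∈ S → u ≠ v →
      ((n / 2 : ℕ) : ℤ) + (Xf i (n / 2) u v : ℤ) ≤ |(f u : ℤ) - (f v : ℤ)| := by
    intro u v hu hv hne
    have h1 := hf u v hne
    have h2 := key u v hu hv hne
    rcases abs_cases ((f u : ℤ) - (f v : ℤ)) with ⟨he, _⟩ | ⟨he, _⟩ <;> rw [he] at h1 ⊢ <;> omega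
  -- injectivity of f on S
  have hginj : ∀ u v : Fin m × Fin n, u ∈ S → v ∈ S → f u = f v → u = v := by
    intro u v hu hv hfuv
    by_contra hne
    have h1 := gap u v hu hv hne
    rw [hfuv, sub_self, abs_zero] at h1
    omega
  -- cardinality of S
  have hinj1 : Function.Injective (fun a : Fin m => ((a, (⟨i, hiA⟩ : Fin n)) : Fin m × Fin n)) := by
    intro x y hxy; simpa using hxy
  have hinj2 : Function.Injective
      (fun a : Fin m => ((a, (⟨i + n / 2, hiB⟩ : Fin n)) : Fin m × Fin n)) := by
    intro x y hxy; simpa using hxy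
  have hmi1 : ∀ p ∈ Finset.univ.image (fun a : Fin m => ((a, (⟨i, hiA⟩ : Fin n)) : Fin m × Fin n)),
      ((p.2 : ℕ)) = i := by
    intro p hp
    rw [Finset.mem_image] at hp
    obtain ⟨a, _, ha⟩ := hp
    rw [← ha]
  have hmi2 : ∀ p ∈ Finset.univ.image
      (fun a : Fin m => ((a, (⟨i + n / 2, hiB⟩ : Fin n)) : Fin m × Fin n)),
      ((p.2 : ℕ)) = i + n / 2 := by
    intro p hp
    rw [Finset.mem_image] at hp
    obtain ⟨a, _, ha⟩ := hp
    rw [← ha]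
  have hSdec : S = ((Finset.univ.image (fun a : Fin m => ((a, (⟨i, hiA⟩ : Fin n)) : Fin m × Fin n))) ∪
      (Finset.univ.image (fun a : Fin m => ((a, (⟨i + n / 2, hiB⟩ : Fin n)) : Fin m × Fin n)))) ∪ {wV} := by
    ext p
    obtain ⟨p1, p2⟩ := p
    simp only [Finset.mem_union, Finset.mem_image, Finset.mem_univ, true_and,
      Finset.mem_singleton, hmem, Prod.mk.injEq, hwV]
    constructor
    · rintro (h1 | h2 | ⟨h3, h4⟩)
      · exact Or.inl (Or.inl ⟨p1, rfl, Fin.ext h1.symm⟩)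
      · exact Or.inl (Or.inr ⟨p1, rfl, Fin.ext h2.symm⟩)
      · exact Or.inr ⟨Fin.ext h3, Fin.ext h4⟩
    · rintro ((⟨a, ha1, ha2⟩ | ⟨a, ha1, ha2⟩) | ⟨h1, h2⟩)
      · exact Or.inl (by rw [← ha2])
      · exact Or.inr (Or.inl (by rw [← ha2]))
      · exact Or.inr (Or.inr ⟨by rw [h1], by rw [h2]⟩)
  have hd12 : Disjoint
      (Finset.univ.image (fun a : Fin m => ((a, (⟨i, hiA⟩ : Fin n)) : Fin m × Fin n)))
      (Finset.univ.image (fun a : Fin m => ((a, (⟨i + n / 2, hiB⟩ : Fin n)) : Fin m × Fin n))) := by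
    rw [Finset.disjoint_left]
    intro p h1 h2
    have := hmi1 p h1
    have := hmi2 p h2
    omega
  have hd12' : Disjoint
      ((Finset.univ.image (fun a : Fin m => ((a, (⟨i, hiA⟩ : Fin n)) : Fin m × Fin n))) ∪
       (Finset.univ.image (fun a : Fin m => ((a, (⟨i + n / 2, hiB⟩ : Fin n)) : Fin m × Fin n))))
      ({wV} : Finset (Fin m × Fin n)) := by
    rw [Finset.disjoint_right]
    intro p h1 h2
    rw [Finset.mem_singleton] at h1
    have hpv : ((p.2 : ℕ)) = i + n / 2 + 1 := by rw [h1, hwV]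
    rw [Finset.mem_union] at h2
    rcases h2 with h2 | h2
    · have := hmi1 p h2; omega
    · have := hmi2 p h2; omega
  have hScard : S.card = 2 * m + 1 := by
    rw [hSdec, Finset.card_union_of_disjoint hd12', Finset.card_union_of_disjoint hd12,
      Finset.card_image_of_injective _ hinj1, Finset.card_image_of_injective _ hinj2,
      Finset.card_singleton, Finset.card_univ, Fintype.card_fin]
    omega
  have hfSA : (S.filter (fun p => (p.2 : ℕ) = i)).card = m := by
    have hfilt : S.filter (fun p => (p.2 : ℕ) = i) =
        Finset.univ.image (fun a : Fin m => ((a, (⟨i, hiA⟩ : Fin n)) : Fin m × Fin n)) := by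
      ext p
      obtain ⟨p1, p2⟩ := p
      simp only [Finset.mem_filter, Finset.mem_image, Finset.mem_univ, true_and, hmem,
        Prod.mk.injEq]
      constructor
      · rintro ⟨-, h2⟩
        exact ⟨p1, rfl, Fin.ext h2.symm⟩
      · rintro ⟨a, ha1, ha2⟩
        constructor
        · exact Or.inl (by rw [← ha2])
        · rw [← ha2]
    rw [hfilt, Finset.card_image_of_injective _ hinj1, Finset.card_univ, Fintype.card_fin]
  -- sorted enumeration of S via labels
  have hfcard : (S.image f).card = 2 * m + 1 := by
    rw [Finset.card_image_of_injOn, hScard]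
    intro u hu v hv hfe
    exact hginj u v (Finset.mem_coe.1 hu) (Finset.mem_coe.1 hv) hfe
  set o := Finset.orderIsoOfFin (S.image f) hfcard with ho
  have hchoice : ∀ k : Fin (2 * m + 1), ∃ v, v ∈ S ∧ f v = ((o k : ℕ)) := by
    intro k
    have h2 := (o k).2
    rw [Finset.mem_image] at h2
    obtain ⟨v, hv1, hv2⟩ := h2
    exact ⟨v, hv1, hv2⟩
  choose e he hfe using hchoice
  have heinj : Function.Injective e := by
    intro k l hkl
    have h1 : ((o k : ℕ)) = ((o l : ℕ)) := by rw [← hfe k, ← hfe l, hkl]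
    exact o.injective (Subtype.coe_injective h1)
  have hN : ∀ k : ℕ, k % (2 * m + 1) < 2 * m + 1 := fun k => Nat.mod_lt _ (by omega)
  set E : ℕ → Fin m × Fin n := fun k => e ⟨k % (2 * m + 1), hN k⟩ with hE
  have hEeq : ∀ k (hk : k < 2 * m + 1), E k = e ⟨k, hk⟩ := by
    intro k hk
    exact congrArg e (Fin.ext (Nat.mod_eq_of_lt hk))
  have hES : ∀ k, E k ∈ S := fun k => he _
  have hEmono : ∀ k l : ℕ, l < 2 * m + 1 → k < l → f (E k) < f (E l) := by
    intro k l hl hkl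
    have hk : k < 2 * m + 1 := by omega
    have h1 : o ⟨k, hk⟩ < o ⟨l, hl⟩ := by
      rw [OrderIso.lt_iff_lt]
      exact Fin.mk_lt_mk.2 hkl
    have h2 : ((o ⟨k, hk⟩ : ℕ)) < ((o ⟨l, hl⟩ : ℕ)) := Subtype.coe_lt_coe.2 h1
    rw [hEeq k hk, hEeq l hl, hfe, hfe]
    exact h2
  have himg : Finset.image (fun k : Fin (2 * m + 1) => e k) Finset.univ = S := by
    apply Finset.eq_of_subset_of_card_le
    · intro p hp
      rw [Finset.mem_image] at hp
      obtain ⟨k, _, hk⟩ := hp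
      rw [← hk]; exact he k
    · rw [hScard, Finset.card_image_of_injective _ heinj, Finset.card_univ, Fintype.card_fin]
  have hEsurj : ∀ p ∈ S, ∃ k, k ≤ 2 * m ∧ E k = p := by
    intro p hp
    rw [← himg, Finset.mem_image] at hp
    obtain ⟨k, _, hk⟩ := hp
    refine ⟨k.val, by have := k.isLt; omega, ?_⟩
    rw [hEeq k.val k.isLt]
    simpa only [Fin.eta] using hk
  -- positions of the two centers
  have hcAS : cA ∈ S := (hmem cA).2 (Or.inl rfl)
  have hcBS : cB ∈ S := (hmem cB).2 (Or.inr (Or.inl rfl))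
  obtain ⟨p, hp, hEp⟩ := hEsurj cA hcAS
  obtain ⟨q, hq, hEq⟩ := hEsurj cB hcBS
  have hEpv : PA i (E p) := by rw [hEp]; exact ⟨rfl, rfl⟩
  have hEqv : PA (i + n / 2) (E q) := by rw [hEq]; exact ⟨rfl, rfl⟩
  -- the three indicator sums
  have hsplit : (Finset.range (2 * m)).sum (fun k => Xf i (n / 2) (E k) (E (k + 1))) =
      (Finset.range (2 * m)).sum (fun k => if PA i (E k) ∨ PA i (E (k + 1)) then 1 else 0) +
      (Finset.range (2 * m)).sum
        (fun k => if PA (i + n / 2) (E k) ∨ PA (i + n / 2) (E (k + 1)) then 1 else 0) +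
      (Finset.range (2 * m)).sum
        (fun k => if (((E k).2 : ℕ) = i ↔ ((E (k + 1)).2 : ℕ) = i) then 1 else 0) := by
    rw [← Finset.sum_add_distrib, ← Finset.sum_add_distrib]
    rfl
  have hsum1 : 1 ≤ (Finset.range (2 * m)).sum
      (fun k => if PA i (E k) ∨ PA i (E (k + 1)) then 1 else 0) := by
    rcases Nat.lt_or_ge p (2 * m) with hp' | hp'
    · have h1 := Finset.single_le_sum
        (f := fun k => if PA i (E k) ∨ PA i (E (k + 1)) then 1 else 0)
        (fun _ _ => Nat.zero_le _) (Finset.mem_range.2 hp')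
      refine le_trans ?_ h1
      exact le_of_eq (if_pos (Or.inl hEpv)).symm
    · have hp2 : p = 2 * m := by omega
      have hstep : PA i (E (2 * m - 1 + 1)) := by
        rw [show 2 * m - 1 + 1 = 2 * m from by omega, ← hp2]; exact hEpv
      have h1 := Finset.single_le_sum
        (f := fun k => if PA i (E k) ∨ PA i (E (k + 1)) then 1 else 0)
        (fun _ _ => Nat.zero_le _) (Finset.mem_range.2 (show 2 * m - 1 < 2 * m by omega))
      refine le_trans ?_ h1
      exact le_of_eq (if_pos (Or.inr hstep)).symm
  have hsum2 : 1 ≤ (Finset.range (2 * m)).sum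
      (fun k => if PA (i + n / 2) (E k) ∨ PA (i + n / 2) (E (k + 1)) then 1 else 0) := by
    rcases Nat.lt_or_ge q (2 * m) with hq' | hq'
    · have h1 := Finset.single_le_sum
        (f := fun k => if PA (i + n / 2) (E k) ∨ PA (i + n / 2) (E (k + 1)) then 1 else 0)
        (fun _ _ => Nat.zero_le _) (Finset.mem_range.2 hq')
      refine le_trans ?_ h1
      exact le_of_eq (if_pos (Or.inl hEqv)).symm
    · have hq2 : q = 2 * m := by omega
      have hstep : PA (i + n / 2) (E (2 * m - 1 + 1)) := by
        rw [show 2 * m - 1 + 1 = 2 * m from by omega, ← hq2]; exact hEqv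
      have h1 := Finset.single_le_sum
        (f := fun k => if PA (i + n / 2) (E k) ∨ PA (i + n / 2) (E (k + 1)) then 1 else 0)
        (fun _ _ => Nat.zero_le _) (Finset.mem_range.2 (show 2 * m - 1 < 2 * m by omega))
      refine le_trans ?_ h1
      exact le_of_eq (if_pos (Or.inr hstep)).symm
  -- the combinatorial bound: total charge at least 3
  have hXsum : 3 ≤ (Finset.range (2 * m)).sum (fun k => Xf i (n / 2) (E k) (E (k + 1))) := by
    by_cases halt : ∃ k, k < 2 * m ∧ (((E k).2 : ℕ) = i ↔ ((E (k + 1)).2 : ℕ) = i)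
    · obtain ⟨k3, hk3, hk3'⟩ := halt
      have hsum3 : 1 ≤ (Finset.range (2 * m)).sum
          (fun k => if (((E k).2 : ℕ) = i ↔ ((E (k + 1)).2 : ℕ) = i) then 1 else 0) := by
        have h1 := Finset.single_le_sum
          (f := fun k => if (((E k).2 : ℕ) = i ↔ ((E (k + 1)).2 : ℕ) = i) then 1 else 0)
          (fun _ _ => Nat.zero_le _) (Finset.mem_range.2 hk3)
        refine le_trans ?_ h1
        exact le_of_eq (if_pos hk3').symm
      rw [hsplit]
      omega
    · push_neg at halt
      by_cases h0 : ((E 0).2 : ℕ) = i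
      · exfalso
        have hpar : ∀ k, k ≤ 2 * m → (((E k).2 : ℕ) = i ↔ k % 2 = 0) := by
          intro k
          induction k with
          | zero => intro _; simp [h0]
          | succ k ih =>
            intro hk
            have h1 := ih (by omega)
            have h2 := halt k (by omega)
            omega
        have hc1 : (Finset.filter (fun k : Fin (2 * m + 1) => ((e k).2 : ℕ) = i)
            Finset.univ).card = (S.filter (fun p => (p.2 : ℕ) = i)).card := by
          apply Finset.card_bij (fun k _ => e k)
          · intro k hk
            rw [Finset.mem_filter] at hk ⊢
            exact ⟨he k, hk.2⟩
          · intro k1 _ k2 _ hkk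
            exact heinj hkk
          · intro pp hpp
            rw [Finset.mem_filter] at hpp
            obtain ⟨k, hk, hEk⟩ := hEsurj pp hpp.1
            have hk' : k < 2 * m + 1 := by omega
            refine ⟨⟨k, hk'⟩, ?_, ?_⟩
            · rw [Finset.mem_filter]
              refine ⟨Finset.mem_univ _, ?_⟩
              rw [← hEeq k hk', hEk]
              exact hpp.2
            · rw [← hEeq k hk', hEk]
        have hc2 : (Finset.filter (fun k : Fin (2 * m + 1) => ((e k).2 : ℕ) = i) Finset.univ)
            = (Finset.filter (fun k : Fin (2 * m + 1) => (k : ℕ) % 2 = 0) Finset.univ) := by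
          ext k
          simp only [Finset.mem_filter, Finset.mem_univ, true_and]
          have h3 := hpar k.val (by have := k.isLt; omega)
          rw [hEeq k.val k.isLt] at h3
          simpa only [Fin.eta] using h3
        have hc3 : (Finset.filter (fun k : Fin (2 * m + 1) => (k : ℕ) % 2 = 0)
            Finset.univ).card = m + 1 := by
          rw [Finset.card_filter]
          rw [Fin.sum_univ_eq_sum_range (fun j => if j % 2 = 0 then 1 else 0) (2 * m + 1)]
          rw [← Finset.card_filter]
          exact card_even_range m
        rw [hc2, hc3, hfSA] at hc1
        omega
      · have hpar : ∀ k, k ≤ 2 * m → (((E k).2 : ℕ) = i ↔ k % 2 = 1) := by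
          intro k
          induction k with
          | zero => intro _; simp [h0]
          | succ k ih =>
            intro hk
            have h1 := ih (by omega)
            have h2 := halt k (by omega)
            omega
        have hp1 : p % 2 = 1 := (hpar p hp).1 hEpv.2
        have hprev : PA i (E (p - 1 + 1)) := by
          rw [show p - 1 + 1 = p from by omega]; exact hEpv
        have hsub : ({p - 1, p} : Finset ℕ) ⊆ Finset.range (2 * m) := by
          intro x hx
          rw [Finset.mem_insert, Finset.mem_singleton] at hx
          rw [Finset.mem_range]
          rcases hx with rfl | rfl <;> omega
        have hpairsum := Finset.sum_le_sum_of_subset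
          (f := fun k => if PA i (E k) ∨ PA i (E (k + 1)) then 1 else 0) hsub
        rw [Finset.sum_pair (show p - 1 ≠ p from by omega)] at hpairsum
        have hpair2 : 2 ≤ (Finset.range (2 * m)).sum
            (fun k => if PA i (E k) ∨ PA i (E (k + 1)) then 1 else 0) := by
          refine le_trans ?_ hpairsum
          have e1 : (if PA i (E (p - 1)) ∨ PA i (E (p - 1 + 1)) then (1 : ℕ) else 0) = 1 :=
            if_pos (Or.inr hprev)
          have e2 : (if PA i (E p) ∨ PA i (E (p + 1)) then (1 : ℕ) else 0) = 1 :=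
            if_pos (Or.inl hEpv)
          calc (2 : ℕ) = (if PA i (E (p - 1)) ∨ PA i (E (p - 1 + 1)) then (1 : ℕ) else 0) +
              (if PA i (E p) ∨ PA i (E (p + 1)) then (1 : ℕ) else 0) := by rw [e1, e2]
            _ ≤ _ := le_refl _
        rw [hsplit]
        omega
  -- telescoping
  set F : ℕ → ℤ := fun k => (f (E k) : ℤ) with hF
  have hB : ∀ k ∈ Finset.range (2 * m),
      ((n / 2 : ℕ) : ℤ) + (Xf i (n / 2) (E k) (E (k + 1)) : ℤ) ≤ F (k + 1) - F k := by
    intro k hk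
    rw [Finset.mem_range] at hk
    have hlt := hEmono k (k + 1) (by omega) (by omega)
    have hne : E k ≠ E (k + 1) := fun hh => by rw [hh] at hlt; omega
    have hg := gap (E k) (E (k + 1)) (hES k) (hES (k + 1)) hne
    rw [abs_sub_comm, abs_of_nonneg (by omega)] at hg
    simpa only [hF] using hg
  have hsum : ((m * n : ℕ) : ℤ) + 3 ≤ F (2 * m) - F 0 := by
    have h0 := Finset.sum_range_sub F (2 * m)
    have h1 := Finset.sum_le_sum hB
    have hA : (Finset.range (2 * m)).sum
        (fun k => ((n / 2 : ℕ) : ℤ) + (Xf i (n / 2) (E k) (E (k + 1)) : ℤ)) =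
        (2 * m : ℕ) * ((n / 2 : ℕ) : ℤ) +
        ((Finset.range (2 * m)).sum (fun k => Xf i (n / 2) (E k) (E (k + 1))) : ℤ) := by
      rw [Finset.sum_add_distrib, Finset.sum_const, Finset.card_range]
      push_cast
      ring
    rw [hA] at h1
    have h2 : (3 : ℤ) ≤
        ((Finset.range (2 * m)).sum (fun k => Xf i (n / 2) (E k) (E (k + 1))) : ℤ) := by
      exact_mod_cast hXsum
    have h3 : ((m * n : ℕ) : ℤ) = (2 * m : ℕ) * ((n / 2 : ℕ) : ℤ) := by
      rw [← Nat.cast_mul]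
      congr 1
      have h5 : n / 2 * 2 = n := Nat.div_mul_cancel (Nat.dvd_of_mod_eq_zero hn)
      calc m * n = m * (n / 2 * 2) := by rw [h5]
        _ = 2 * m * (n / 2) := by ring
    rw [← h0]
    rw [h3]
    linarith
  -- conclude
  have hmax : f (E (2 * m)) ≤ sSup (f '' ↑S) := by
    refine le_csSup (Set.Finite.bddAbove (Set.Finite.image f (Finset.finite_toSet S))) ?_
    exact ⟨E (2 * m), hES _, rfl⟩
  have hmin : sInf (f '' ↑S) ≤ f (E 0) := Nat.sInf_le ⟨E 0, hES 0, rfl⟩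
  have hsum' : ((m * n : ℕ) : ℤ) + 3 ≤ ((f (E (2 * m)) : ℕ) : ℤ) - ((f (E 0) : ℕ) : ℤ) := hsum
  obtain ⟨K, hK⟩ : ∃ K : ℕ, K = m * n := ⟨_, rfl⟩
  rw [← hK] at hsum' ⊢
  omega
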